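/- Let m ∈ ℝ, let 0 < T_i < T_{i−1}, let ŝ_{i−1} be a real random variable, and let s̃_i = m + Z where Z ∼ N(0, σ_i²) is independent of ŝ_{i−1}, with 1/σ_i² = 1/T_i − 1/T_{i−1}. Define ŝ_i = T_i · ( ŝ_{i−1}/T_{i−1} + s̃_i/σ_i² ). Then the conditional distribution of ŝ_i given ŝ_{i−1} is Gaussian with mean m + (T_i/T_{i−1})·(ŝ_{i−1} − m) and variance T_i·(T_{i−1} − T_i)/T_{i−1}. -/

import Mathlib

open MeasureTheory ProbabilityTheory
open scoped NNReal ENNReal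

/-- One step of the sequential precision-weighted Gaussian
mechanism has the Brownian-mechanism conditional law.  Let `m ∈ ℝ`,
`0 < Ti < Tprev`, let `W` (playing the role of `ŝ_{i-1}`) be a real random
variable, and let `s̃ = m + Z` with `Z ∼ N(0, σ²)` independent of `W`, where
`1/σ² = 1/Ti - 1/Tprev`.  Define `ŝᵢ = Ti * (W / Tprev + s̃ / σ²)`.  Then the
conditional distribution of `ŝᵢ` given `W` is Gaussian with mean
`m + (Ti/Tprev) * (W - m)` and variance `Ti * (Tprev - Ti) / Tprev`. -/
theorem precision_weighted_step_conditional_gaussian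
    {Ω : Type*} [MeasurableSpace Ω]
    (P : Measure Ω) [IsProbabilityMeasure P]
    (m Tprev Ti : ℝ) (hTi : 0 < Ti) (hTT : Ti < Tprev)
    (σ2 : ℝ) (hσ2 : 1 / σ2 = 1 / Ti - 1 / Tprev)
    (W Z : Ω → ℝ) (hW : Measurable W) (hZ : Measurable Z)
    (hZlaw : P.map Z = gaussianReal 0 σ2.toNNReal)
    (hindep : IndepFun W Z P)
    (Si : Ω → ℝ) (hSi : ∀ ω, Si ω = Ti * (W ω / Tprev + (m + Z ω) / σ2)) :
    ∀ᵐ a ∂(P.map W),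
      condDistrib Si W P a =
        gaussianReal (m + (Ti / Tprev) * (a - m))
          (Real.toNNReal (Ti * (Tprev - Ti) / Tprev)) := by
  have hTp : 0 < Tprev := hTi.trans hTT
  have hσpos : 0 < σ2 := by
    have h1 : 0 < 1 / σ2 := by
      rw [hσ2]
      have h2 : 1 / Tprev < 1 / Ti := one_div_lt_one_div_of_lt hTi hTT
      linarith
    exact one_div_pos.mp h1
  have hσne : σ2 ≠ 0 := hσpos.ne'
  -- key algebraic relation: σ2 * (Tprev - Ti) = Ti * Tprev
  have hσ2' : σ2 * (Tprev - Ti) = Ti * Tprev := by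
    field_simp at hσ2
    linarith [hσ2]
  set ν : Measure ℝ := gaussianReal 0 σ2.toNNReal with hν
  set c : ℝ := Ti / σ2 with hc
  set g : ℝ → ℝ → ℝ := fun a z => Ti * (a / Tprev + (m + z) / σ2) with hg
  have hgm : Measurable (fun p : ℝ × ℝ => g p.1 p.2) := by
    simp only [hg]; fun_prop
  -- the law of g a under ν
  have hvar : (NNReal.mk (c ^ 2) (sq_nonneg c) * σ2.toNNReal : ℝ≥0)
      = (Ti * (Tprev - Ti) / Tprev).toNNReal := by
    rw [← NNReal.coe_inj]
    push_cast
    rw [Real.coe_toNNReal _ hσpos.le,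
      Real.coe_toNNReal _ (div_nonneg (mul_nonneg hTi.le (by linarith)) hTp.le)]
    rw [hc]
    field_simp
    linear_combination (-1 : ℝ) * hσ2'
  have hlaw : ∀ a : ℝ, ν.map (g a)
      = gaussianReal (m + Ti / Tprev * (a - m)) (Ti * (Tprev - Ti) / Tprev).toNNReal := by
    intro a
    have h1 : g a = (fun z => z + (m + Ti / Tprev * (a - m))) ∘ (fun z => c * z) := by
      funext z
      simp only [Function.comp_apply, hg, hc]
      field_simp
      linear_combination (-m) * hσ2'
    rw [h1, ← Measure.map_map (measurable_add_const _) (measurable_const_mul c), hν]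
    have h2 : (fun z : ℝ => c * z) = (c * ·) := rfl
    have h3 : (fun z : ℝ => z + (m + Ti / Tprev * (a - m)))
        = (· + (m + Ti / Tprev * (a - m))) := rfl
    rw [h2, gaussianReal_map_const_mul, h3, gaussianReal_map_add_const, mul_zero, zero_add, hvar]
  -- the kernel
  set κ : Kernel ℝ ℝ :=
    Kernel.map (Kernel.id ×ₖ Kernel.const ℝ ν) (fun p : ℝ × ℝ => g p.1 p.2) with hκ
  have hκa : ∀ a : ℝ, κ a = ν.map (g a) := by
    intro a
    rw [hκ, Kernel.map_apply _ hgm, Kernel.prod_apply, Kernel.id_apply, Kernel.const_apply,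
      Measure.dirac_prod, Measure.map_map hgm measurable_prodMk_left]
    rfl
  have hSiEq : Si = fun ω => g (W ω) (Z ω) := funext hSi
  have hSim : Measurable Si := by
    rw [hSiEq]; simp only [hg]; fun_prop
  have hjoint : P.map (fun ω => (W ω, Z ω)) = (P.map W).prod ν := by
    rw [← hZlaw]
    exact (indepFun_iff_map_prod_eq_prod_map_map hW.aemeasurable hZ.aemeasurable).mp hindep
  have hφ : Measurable (fun p : ℝ × ℝ => (p.1, g p.1 p.2)) :=
    measurable_fst.prodMk hgm
  have h2 : P.map (fun ω => (W ω, Si ω))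
      = ((P.map W).prod ν).map (fun p : ℝ × ℝ => (p.1, g p.1 p.2)) := by
    rw [← hjoint, Measure.map_map hφ (hW.prodMk hZ)]
    congr 1
    funext ω
    simp [hSiEq]
  have hcomp : P.map (fun ω => (W ω, Si ω)) = (P.map W) ⊗ₘ κ := by
    ext s hs
    rw [h2, Measure.map_apply hφ hs, Measure.prod_apply (hφ hs), Measure.compProd_apply hs]
    refine lintegral_congr fun a => ?_
    rw [hκa a, Measure.map_apply (by simp only [hg]; fun_prop) (measurable_prodMk_left hs)]
    rfl
  have hae := condDistrib_ae_eq_of_measure_eq_compProd_of_measurable hW hSim hcomp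
  filter_upwards [hae] with a ha
  rw [ha, hκa a, hlaw a]
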